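/- Let ν be a Gibbs measure on Θ and let w ∈ Θ be a periodic point, τ^p(w) = w for some p ≥ 1. Then both limits L_u = lim_{n→∞} ν({v ∈ Θ : v_i = w_i for 0 ≤ i ≤ (n+1)p}) / ν({v ∈ Θ : v_i = w_i for 0 ≤ i ≤ np}) and L_s = lim_{n→∞} ν({v ∈ Θ : v_{−i} = w_{−i} for 0 ≤ i ≤ (n+1)p}) / ν({v ∈ Θ : v_{−i} = w_{−i} for 0 ≤ i ≤ np}) exist, and L_u = L_s. (At periodic orbits the stable and unstable measure ratios of a Gibbs measure coincide.) -/

import Mathlib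

open MeasureTheory Filter Topology

namespace PaperSFT

/-- The two-sided subshift of finite type determined by the transition function `A`. -/
abbrev Theta {k : ℕ} (A : Fin k → Fin k → Bool) : Type :=
  {w : ℤ → Fin k // ∀ i : ℤ, A (w i) (w (i + 1)) = true}

/-- The one-sided (unstable) subshift of right-infinite admissible words. -/
abbrev ThetaU {k : ℕ} (A : Fin k → Fin k → Bool) : Type :=
  {w : ℕ → Fin k // ∀ i : ℕ, A (w i) (w (i + 1)) = true}

/-- The one-sided (stable) subshift of left-infinite admissible words `… w₁ w₀`. -/
abbrev ThetaS {k : ℕ} (A : Fin k → Fin k → Bool) : Type :=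
  {w : ℕ → Fin k // ∀ i : ℕ, A (w (i + 1)) (w i) = true}

/-- The transition matrix of `A`. -/
def tmat {k : ℕ} (A : Fin k → Fin k → Bool) : Matrix (Fin k) (Fin k) ℕ :=
  fun i j => if A i j then 1 else 0

/-- Some power `N ≥ 1` of the transition matrix has all entries positive. -/
def Mixing {k : ℕ} (A : Fin k → Fin k → Bool) : Prop :=
  ∃ N : ℕ, 1 ≤ N ∧ ∀ i j : Fin k, 0 < (tmat A ^ N) i j

/-- The two-sided shift map `τ`. -/
def shift {k : ℕ} (A : Fin k → Fin k → Bool) : Theta A → Theta A :=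
  fun w => ⟨fun i => w.1 (i + 1), fun i => w.2 (i + 1)⟩

/-- The one-sided shift map `τ_u`. -/
def shiftU {k : ℕ} (A : Fin k → Fin k → Bool) : ThetaU A → ThetaU A :=
  fun w => ⟨fun i => w.1 (i + 1), fun i => w.2 (i + 1)⟩

/-- The cylinder `{v ∈ Θ : v_i = w_i for m ≤ i ≤ n}` (nonnegative coordinates). -/
def cylP {k : ℕ} (A : Fin k → Fin k → Bool) (w : ℕ → Fin k) (m n : ℕ) : Set (Theta A) :=
  {v : Theta A | ∀ i : ℕ, m ≤ i → i ≤ n → v.1 (i : ℤ) = w i}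

/-- The cylinder `{v ∈ Θ : v_{-i} = w_i for m ≤ i ≤ n}` (nonpositive coordinates). -/
def cylN {k : ℕ} (A : Fin k → Fin k → Bool) (w : ℕ → Fin k) (m n : ℕ) : Set (Theta A) :=
  {v : Theta A | ∀ i : ℕ, m ≤ i → i ≤ n → v.1 (-(i : ℤ)) = w i}

/-- The ratio `ν(E)/ν(F)` of the measures of two sets, as a real number. -/
noncomputable def mratio {k : ℕ} {A : Fin k → Fin k → Bool}
    (ν : Measure (Theta A)) (E F : Set (Theta A)) : ℝ :=
  (ν E).toReal / (ν F).toReal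

/-- Hölder continuity of a function on a one-sided sequence space, with respect to the
metric `d(w,w') = 2^{-n}` where `n` is the largest integer with `w_i = w'_i` for `i ≤ n`. -/
def HolderOnSeq {k : ℕ} {P : (ℕ → Fin k) → Prop} (φ : {w : ℕ → Fin k // P w} → ℝ) : Prop :=
  ∃ c : ℝ, 0 < c ∧ ∃ β : ℝ, 0 < β ∧ ∀ w w' : {w : ℕ → Fin k // P w}, ∀ n : ℕ,
    (∀ i ≤ n, w.1 i = w'.1 i) → |φ w - φ w'| ≤ c * (2 : ℝ) ^ (-(n : ℝ) * β)

/-- `ν` is invariant under the two-sided shift. -/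
def Invariant {k : ℕ} (A : Fin k → Fin k → Bool) (ν : Measure (Theta A)) : Prop :=
  ∀ S : Set (Theta A), MeasurableSet S → ν (shift A ⁻¹' S) = ν S

/-- `ν` gives positive measure to every cylinder. -/
def PosOnCyl {k : ℕ} (A : Fin k → Fin k → Bool) (ν : Measure (Theta A)) : Prop :=
  ∀ (w : Theta A) (a b : ℤ),
    0 < ν {v : Theta A | ∀ i : ℤ, a ≤ i → i ≤ b → v.1 i = w.1 i}

/-- The ratios `ν(Θ_{w₀…w_n}) / ν(Θ_{w₁…w_n})` converge to `L` (as `n → ∞`). -/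
def URatioLim {k : ℕ} (A : Fin k → Fin k → Bool) (ν : Measure (Theta A))
    (w : ThetaU A) (L : ℝ) : Prop :=
  Tendsto (fun n : ℕ =>
      mratio ν (cylP A w.1 0 (n + 1)) (cylP A (fun i => w.1 (i + 1)) 0 n))
    atTop (𝓝 L)

/-- The ratios `ν({v : v_{-i} = w_i, 0 ≤ i ≤ n}) / ν({v : v_{-i} = w_i, 1 ≤ i ≤ n})`
converge to `L`. -/
def SRatioLim {k : ℕ} (A : Fin k → Fin k → Bool) (ν : Measure (Theta A))
    (w : ThetaS A) (L : ℝ) : Prop :=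
  Tendsto (fun n : ℕ => mratio ν (cylN A w.1 0 n) (cylN A w.1 1 n)) atTop (𝓝 L)

/-- A Gibbs measure: a shift-invariant Borel probability measure which is positive on
cylinders and whose one-sided measure ratios converge to Hölder continuous scaling
functions on `Θ^u` and `Θ^s`. -/
def IsGibbs {k : ℕ} (A : Fin k → Fin k → Bool) (ν : Measure (Theta A)) : Prop :=
  IsProbabilityMeasure ν ∧ Invariant A ν ∧ PosOnCyl A ν ∧
  (∃ sU : ThetaU A → ℝ, HolderOnSeq sU ∧ ∀ w : ThetaU A, URatioLim A ν w (sU w)) ∧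
  (∃ sS : ThetaS A → ℝ, HolderOnSeq sS ∧ ∀ w : ThetaS A, SRatioLim A ν w (sS w))

/-- `c₀ … c_{n-1}` is an admissible word. -/
def AdmWord {k : ℕ} (A : Fin k → Fin k → Bool) (c : ℕ → Fin k) (n : ℕ) : Prop :=
  ∀ i : ℕ, i + 1 < n → A (c i) (c (i + 1)) = true

/-- The set `E_m = {v ∈ Θ : v_{-i} = ξ_i for 0 ≤ i ≤ m and v_j = c_j for 0 ≤ j ≤ n-1}`. -/
def cylE {k : ℕ} (A : Fin k → Fin k → Bool) (ξ : ThetaS A) (c : ℕ → Fin k)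
    (n m : ℕ) : Set (Theta A) :=
  {v : Theta A | (∀ i : ℕ, i ≤ m → v.1 (-(i : ℤ)) = ξ.1 i) ∧
    (∀ j : ℕ, j < n → v.1 (j : ℤ) = c j)}

/-- `ρ_ξ(c₀…c_{n-1}) = r`, i.e. the ratios `ν(E_m)/ν(F_m)` converge to `r`. -/
def RhoLim {k : ℕ} (A : Fin k → Fin k → Bool) (ν : Measure (Theta A))
    (ξ : ThetaS A) (c : ℕ → Fin k) (n : ℕ) (r : ℝ) : Prop :=
  Tendsto (fun m : ℕ => mratio ν (cylE A ξ c n m) (cylN A ξ.1 0 m)) atTop (𝓝 r)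

/-- Prepending an admissible symbol `a` to a right-infinite word `ξ`; this enumerates the
preimages of `ξ` under the one-sided shift `τ_u`. -/
def consU {k : ℕ} (A : Fin k → Fin k → Bool) (a : Fin k) (ξ : ThetaU A)
    (h : A a (ξ.1 0) = true) : ThetaU A :=
  ⟨fun i => Nat.rec a (fun j _ => ξ.1 j) i, by
    intro i
    cases i with
    | zero => exact h
    | succ j => exact ξ.2 j⟩

end PaperSFT

namespace PaperSFT

section Aux

variable {k : ℕ} {A : Fin k → Fin k → Bool}

/-- A general two-sided cylinder with word given by an arbitrary function. -/
def cylZ (A : Fin k → Fin k → Bool) (u : ℤ → Fin k) (a b : ℤ) : Set (Theta A) :=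
  {v : Theta A | ∀ i : ℤ, a ≤ i → i ≤ b → v.1 i = u i}

lemma measurable_eval (i : ℤ) : Measurable fun v : Theta A => v.1 i :=
  (measurable_pi_apply i).comp measurable_subtype_coe

lemma cylZ_measurableSet (u : ℤ → Fin k) (a b : ℤ) : MeasurableSet (cylZ A u a b) := by
  have h : cylZ A u a b = ⋂ i : ℤ, {v : Theta A | a ≤ i → i ≤ b → v.1 i = u i} := by
    ext v; simp [cylZ, Set.mem_iInter]
  rw [h]
  refine MeasurableSet.iInter fun i => ?_
  by_cases hi : a ≤ i ∧ i ≤ b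
  · have h2 : {v : Theta A | a ≤ i → i ≤ b → v.1 i = u i}
        = (fun v : Theta A => v.1 i) ⁻¹' {u i} := by
      ext v; simp [hi.1, hi.2]
    rw [h2]
    exact measurable_eval i (measurableSet_singleton _)
  · have h2 : {v : Theta A | a ≤ i → i ≤ b → v.1 i = u i} = Set.univ := by
      ext v
      simp only [Set.mem_setOf_eq, Set.mem_univ, iff_true]
      intro h1 h2; exact absurd ⟨h1, h2⟩ hi
    rw [h2]; exact MeasurableSet.univ

lemma measurable_shift : Measurable (shift A) :=
  Measurable.subtype_mk (measurable_pi_lambda _ fun i => measurable_eval (i + 1))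

lemma shift_iterate_apply (m : ℕ) (v : Theta A) (i : ℤ) :
    ((shift A)^[m] v).1 i = v.1 (i + m) := by
  induction m generalizing i with
  | zero => simp
  | succ n ih =>
    rw [Function.iterate_succ_apply']
    show ((shift A)^[n] v).1 (i + 1) = _
    rw [ih]
    have e : i + 1 + (n : ℤ) = i + ((n + 1 : ℕ) : ℤ) := by push_cast; ring
    rw [e]

lemma iterate_preimage_cylZ (m : ℕ) (u : ℤ → Fin k) (a b : ℤ) :
    (shift A)^[m] ⁻¹' cylZ A u a b = cylZ A (fun j => u (j - m)) (a + m) (b + m) := by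
  ext v
  simp only [Set.mem_preimage, cylZ, Set.mem_setOf_eq, shift_iterate_apply]
  constructor
  · intro h j hj1 hj2
    have h2 := h (j - m) (by omega) (by omega)
    have e : j - (m : ℤ) + m = j := by ring
    rwa [e] at h2
  · intro h i hi1 hi2
    have h2 := h (i + m) (by omega) (by omega)
    have e : i + (m : ℤ) - m = i := by ring
    rwa [e] at h2

lemma invariant_iterate {ν : Measure (Theta A)} (hinv : Invariant A ν) (m : ℕ)
    {S : Set (Theta A)} (hS : MeasurableSet S) :
    ν ((shift A)^[m] ⁻¹' S) = ν S := by
  induction m with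
  | zero => rfl
  | succ n ih =>
    rw [Function.iterate_succ, Set.preimage_comp,
      hinv _ ((measurable_shift.iterate n) hS)]
    exact ih

lemma meas_cylZ_shift {ν : Measure (Theta A)} (hinv : Invariant A ν) (m : ℕ)
    (u : ℤ → Fin k) (a b : ℤ) :
    ν (cylZ A (fun j => u (j - m)) (a + m) (b + m)) = ν (cylZ A u a b) := by
  rw [← iterate_preimage_cylZ]
  exact invariant_iterate hinv m (cylZ_measurableSet u a b)

lemma telescope (x : ℕ → ℝ) (hx : ∀ m, x m ≠ 0) (m q : ℕ) :
    ∏ j ∈ Finset.range q, x (m + j + 1) / x (m + j) = x (m + q) / x m := by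
  induction q with
  | zero => simp [div_self (hx m)]
  | succ q ih =>
    rw [Finset.prod_range_succ, ih]
    have h1 := hx m
    have h2 := hx (m + q)
    have e : m + (q + 1) = m + q + 1 := by ring
    rw [e]
    field_simp

lemma periodic_add {w : Theta A} {p : ℕ} (hper : (shift A)^[p] w = w) (i : ℤ) :
    w.1 (i + p) = w.1 i := by
  have h := congrArg (fun v : Theta A => v.1 i) hper
  simpa [shift_iterate_apply] using h

lemma periodic_sub_mul {w : Theta A} {p : ℕ} (hper : (shift A)^[p] w = w) (t : ℕ) (i : ℤ) :
    w.1 (i - ((t * p : ℕ) : ℤ)) = w.1 i := by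
  induction t generalizing i with
  | zero => simp
  | succ t ih =>
    have h1 := periodic_add hper (i - (((t + 1) * p : ℕ) : ℤ))
    have e : i - (((t + 1) * p : ℕ) : ℤ) + p = i - ((t * p : ℕ) : ℤ) := by push_cast; ring
    rw [e] at h1
    rw [← h1]
    exact ih i

lemma keyEq {ν : Measure (Theta A)} (hinv : Invariant A ν) {w : Theta A} {p : ℕ}
    (hper : (shift A)^[p] w = w) (m r : ℕ) (hr : r ≤ m) (hd : p ∣ (m - r)) :
    ν (cylZ A w.1 0 (m : ℤ)) = ν (cylZ A (fun j => w.1 (j + r)) (-(m : ℤ)) 0) := by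
  obtain ⟨t, ht⟩ := hd
  have h := meas_cylZ_shift hinv m (fun j => w.1 (j + r)) (-(m : ℤ)) 0
  have e1 : -(m : ℤ) + m = 0 := by ring
  have e2 : (0 : ℤ) + m = m := by ring
  rw [e1, e2] at h
  have efun : (fun j : ℤ => w.1 (j - m + r)) = w.1 := by
    funext j
    have e3 : j - (m : ℤ) + r = j - ((t * p : ℕ) : ℤ) := by
      have ht' : m - r = t * p := by rw [ht]; ring
      push_cast
      omega
    rw [e3, periodic_sub_mul hper]
  rw [efun] at h
  exact h

lemma cylP_eq_cylZ (w : Theta A) (m : ℕ) :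
    cylP A (fun i : ℕ => w.1 (i : ℤ)) 0 m = cylZ A w.1 0 (m : ℤ) := by
  ext v
  simp only [cylP, cylZ, Set.mem_setOf_eq]
  constructor
  · intro h i h0 hm
    obtain ⟨n, rfl⟩ := Int.eq_ofNat_of_zero_le h0
    exact h n (Nat.zero_le n) (by exact_mod_cast hm)
  · intro h i _ hm
    exact h i (Int.natCast_nonneg i) (by exact_mod_cast hm)

lemma cylN_eq_cylZ (w : Theta A) (m : ℕ) :
    cylN A (fun i : ℕ => w.1 (-(i : ℤ))) 0 m = cylZ A w.1 (-(m : ℤ)) 0 := by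
  ext v
  simp only [cylN, cylZ, Set.mem_setOf_eq]
  constructor
  · intro h j hj1 hj2
    have hn : j = -((((-j).toNat : ℕ) : ℤ)) := by omega
    rw [hn]
    exact h (-j).toNat (Nat.zero_le _) (by omega)
  · intro h i _ him
    exact h (-(i : ℤ)) (by omega) (by omega)

/-- The left-infinite periodic word `… w_{j-2} w_{j-1} w_j` read as an element of `Θˢ`. -/
def xiS (w : Theta A) (j : ℕ) : ThetaS A :=
  ⟨fun i => w.1 ((j : ℤ) - i), by
    intro i
    have h := w.2 ((j : ℤ) - i - 1)
    have e : (j : ℤ) - ((i + 1 : ℕ) : ℤ) = (j : ℤ) - i - 1 := by push_cast; ring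
    have e' : (j : ℤ) - i - 1 + 1 = (j : ℤ) - i := by ring
    rw [e'] at h
    show A (w.1 ((j : ℤ) - ((i + 1 : ℕ) : ℤ))) (w.1 ((j : ℤ) - (i : ℕ))) = true
    rw [e]
    exact h⟩

lemma cylN_xiS_zero (w : Theta A) (j M : ℕ) :
    cylN A (xiS w j).1 0 M = cylZ A (fun l => w.1 (l + j)) (-(M : ℤ)) 0 := by
  ext v
  simp only [cylN, cylZ, xiS, Set.mem_setOf_eq]
  constructor
  · intro h l hl1 hl2
    have h2 := h (-l).toNat (Nat.zero_le _) (by omega)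
    have e1 : -((((-l).toNat : ℕ) : ℤ)) = l := by omega
    have e2 : (j : ℤ) - (((-l).toNat : ℕ) : ℤ) = l + j := by omega
    rw [e1, e2] at h2
    exact h2
  · intro h i _ him
    have h2 := h (-(i : ℤ)) (by omega) (by omega)
    have e : -(i : ℤ) + j = (j : ℤ) - i := by ring
    rw [e] at h2
    exact h2

lemma cylN_xiS_one (w : Theta A) (j M : ℕ) :
    cylN A (xiS w j).1 1 M = cylZ A (fun l => w.1 (l + j)) (-(M : ℤ)) (-1) := by
  ext v
  simp only [cylN, cylZ, xiS, Set.mem_setOf_eq]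
  constructor
  · intro h l hl1 hl2
    have h2 := h (-l).toNat (by omega) (by omega)
    have e1 : -((((-l).toNat : ℕ) : ℤ)) = l := by omega
    have e2 : (j : ℤ) - (((-l).toNat : ℕ) : ℤ) = l + j := by omega
    rw [e1, e2] at h2
    exact h2
  · intro h i hi1 him
    have h2 := h (-(i : ℤ)) (by omega) (by omega)
    have e : -(i : ℤ) + j = (j : ℤ) - i := by ring
    rw [e] at h2
    exact h2

lemma meas_cylN_xiS_one {ν : Measure (Theta A)} (hinv : Invariant A ν)
    (w : Theta A) (j M : ℕ) :
    ν (cylN A (xiS w (j + 1)).1 1 M)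
      = ν (cylZ A (fun l => w.1 (l + j)) (-(M : ℤ) + 1) 0) := by
  rw [cylN_xiS_one]
  have h := meas_cylZ_shift hinv 1 (fun l => w.1 (l + (j + 1 : ℕ))) (-(M : ℤ)) (-1)
  have e1 : (-1 : ℤ) + ((1 : ℕ) : ℤ) = 0 := by norm_num
  have e2 : -(M : ℤ) + ((1 : ℕ) : ℤ) = -(M : ℤ) + 1 := by norm_num
  rw [e1, e2] at h
  have efun : (fun l : ℤ => w.1 (l - ((1 : ℕ) : ℤ) + (j + 1 : ℕ)))
      = fun l : ℤ => w.1 (l + j) := by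
    funext l
    have e : l - ((1 : ℕ) : ℤ) + ((j + 1 : ℕ) : ℤ) = l + (j : ℤ) := by push_cast; ring
    rw [e]
  rw [efun] at h
  exact h.symm

end Aux

/-- **Stable and unstable measure ratios coincide at periodic orbits.**  For a Gibbs
measure `ν` and a periodic point `w` of period `p`, both limits
`L_u = lim ν({v : v_i = w_i, 0 ≤ i ≤ (n+1)p}) / ν({v : v_i = w_i, 0 ≤ i ≤ np})` and
`L_s = lim ν({v : v_{-i} = w_{-i}, 0 ≤ i ≤ (n+1)p}) / ν({v : v_{-i} = w_{-i}, 0 ≤ i ≤ np})`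
exist and are equal. -/
theorem gibbs_periodic_ratio_limits_coincide
    (k : ℕ) (hk : 1 ≤ k) (A : Fin k → Fin k → Bool) (hA : Mixing A)
    (ν : Measure (Theta A)) (hν : IsGibbs A ν)
    (w : Theta A) (p : ℕ) (hp : 1 ≤ p) (hper : (shift A)^[p] w = w) :
    ∃ L : ℝ,
      Tendsto (fun n : ℕ =>
          mratio ν (cylP A (fun i => w.1 (i : ℤ)) 0 ((n + 1) * p))
            (cylP A (fun i => w.1 (i : ℤ)) 0 (n * p))) atTop (𝓝 L) ∧
      Tendsto (fun n : ℕ =>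
          mratio ν (cylN A (fun i => w.1 (-(i : ℤ))) 0 ((n + 1) * p))
            (cylN A (fun i => w.1 (-(i : ℤ))) 0 (n * p))) atTop (𝓝 L) := by
  obtain ⟨hprob, hinv, hpos, -, sS, -, hsS⟩ := hν
  haveI := hprob
  set F : ℕ → ℝ := fun m => (ν (cylZ A w.1 0 (m : ℤ))).toReal with hF
  have hFpos : ∀ m, 0 < F m := fun m =>
    ENNReal.toReal_pos (hpos w 0 (m : ℤ)).ne' (measure_ne_top ν _)
  -- the elementary one-step ratios, identified with stable-ratio terms
  have hfac : ∀ j n : ℕ,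
      mratio ν (cylN A (xiS w (j + 1)).1 0 (n * p + j + 1))
          (cylN A (xiS w (j + 1)).1 1 (n * p + j + 1))
        = F (n * p + j + 1) / F (n * p + j) := by
    intro j n
    have hnum : ν (cylN A (xiS w (j + 1)).1 0 (n * p + j + 1))
        = ν (cylZ A w.1 0 ((n * p + j + 1 : ℕ) : ℤ)) := by
      rw [cylN_xiS_zero]
      have h := keyEq hinv hper (n * p + j + 1) (j + 1) (by omega)
        (by rw [show n * p + j + 1 - (j + 1) = n * p from by omega]
            exact dvd_mul_left p n)
      exact h.symm
    have hden : ν (cylN A (xiS w (j + 1)).1 1 (n * p + j + 1))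
        = ν (cylZ A w.1 0 ((n * p + j : ℕ) : ℤ)) := by
      rw [meas_cylN_xiS_one hinv]
      have h := keyEq hinv hper (n * p + j) j (by omega)
        (by rw [show n * p + j - j = n * p from by omega]
            exact dvd_mul_left p n)
      have e : -(((n * p + j + 1 : ℕ) : ℤ)) + 1 = -(((n * p + j : ℕ) : ℤ)) := by
        push_cast; ring
      rw [e]
      exact h.symm
    simp only [mratio, hnum, hden, hF]
  -- each factor converges to the stable scaling function value
  have hmono : ∀ j : ℕ, Tendsto (fun n : ℕ => n * p + j + 1) atTop atTop := by
    intro j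
    refine tendsto_atTop_mono (fun n => ?_) tendsto_id
    simp only [id_eq]
    have := Nat.le_mul_of_pos_right n hp
    omega
  have hfactend : ∀ j : ℕ, Tendsto (fun n : ℕ => F (n * p + j + 1) / F (n * p + j))
      atTop (𝓝 (sS (xiS w (j + 1)))) := by
    intro j
    have h0 : Tendsto (fun M : ℕ => mratio ν (cylN A (xiS w (j + 1)).1 0 M)
        (cylN A (xiS w (j + 1)).1 1 M)) atTop (𝓝 (sS (xiS w (j + 1)))) :=
      hsS (xiS w (j + 1))
    exact (h0.comp (hmono j)).congr fun n => hfac j n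
  -- the product of the factors, i.e. the ratio over a full period, converges
  have hmain : Tendsto (fun n : ℕ => F ((n + 1) * p) / F (n * p)) atTop
      (𝓝 (∏ j ∈ Finset.range p, sS (xiS w (j + 1)))) := by
    have hprod := tendsto_finset_prod (Finset.range p)
      (fun j (_ : j ∈ Finset.range p) => hfactend j)
    refine hprod.congr fun n => ?_
    rw [telescope F (fun m => (hFpos m).ne') (n * p) p]
    have e : n * p + p = (n + 1) * p := by ring
    rw [e]
  -- conclusion
  refine ⟨∏ j ∈ Finset.range p, sS (xiS w (j + 1)), ?_, ?_⟩
  · refine hmain.congr fun n => ?_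
    simp only [mratio, cylP_eq_cylZ, hF]
  · have hback : ∀ m : ℕ, p ∣ m →
        ν (cylZ A w.1 (-(m : ℤ)) 0) = ν (cylZ A w.1 0 (m : ℤ)) := by
      intro m hm
      have h := keyEq hinv hper m 0 (Nat.zero_le _) (by rwa [Nat.sub_zero])
      have efun : (fun l : ℤ => w.1 (l + ((0 : ℕ) : ℤ))) = w.1 := by
        funext l; norm_num
      rw [efun] at h
      exact h.symm
    refine hmain.congr fun n => ?_
    simp only [mratio]
    rw [cylN_eq_cylZ w ((n + 1) * p), cylN_eq_cylZ w (n * p),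
      hback ((n + 1) * p) (dvd_mul_left p (n + 1)), hback (n * p) (dvd_mul_left p n)]

end PaperSFT
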